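/- arXiv:2002.08524 — 2 statements merged into one kernel-verified Lean document; each statement's English description precedes it below -/
import Mathlib

section
/- Let ℓ be a positive integer and for q = (q_1,…,q_{ℓ−1}) ∈ ℂ^{ℓ−1} let P_q(y) = 1 + q_1 y + ⋯ + q_{ℓ−1} y^{ℓ−1} + y^ℓ. For every permutation σ of {1,…,ℓ} there exist a continuous loop γ : [0,1] → ℂ^{ℓ−1} with γ(0) = γ(1) = 0 and continuous functions κ_1,…,κ_ℓ : [0,1] → ℂ such that P_{γ(t)}(κ_j(t)) = 0 for all t ∈ [0,1] and all j ∈ {1,…,ℓ}, κ_j(0) = ζ_j, and κ_j(1) = ζ_{σ(j)}. (Lemma 5.2 of the paper: the monodromy of solutions of the mirror curve equation realizes every permutation.) -/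
open Complex

/-- The restricted mirror curve polynomial `P_q(y) = 1 + q_1 y + ⋯ + q_{ℓ-1} y^{ℓ-1} + y^ℓ`. -/
noncomputable def mirrorP (ℓ : ℕ) (q : Fin (ℓ - 1) → ℂ) (y : ℂ) : ℂ :=
  1 + ∑ a : Fin (ℓ - 1), q a * y ^ ((a : ℕ) + 1) + y ^ ℓ

/-- The roots `ζ_j = exp(π√-1(2j-1)/ℓ)`, `j = 1, …, ℓ`, of `P_0(y) = 1 + y^ℓ`. -/
noncomputable def zetaRoot (ℓ : ℕ) (j : Fin ℓ) : ℂ :=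
  Complex.exp (Real.pi * Complex.I * (2 * ((j : ℕ) : ℂ) + 1) / (ℓ : ℂ))

namespace MirrorAux

open Polynomial

lemma zeta_pow {ℓ : ℕ} (hℓ : 0 < ℓ) (j : Fin ℓ) : zetaRoot ℓ j ^ ℓ = -1 := by
  have hℓ' : (ℓ:ℂ) ≠ 0 := Nat.cast_ne_zero.2 hℓ.ne'
  rw [zetaRoot, ← Complex.exp_nat_mul]
  have harg : (ℓ:ℂ) * (↑Real.pi * I * (2 * ((j:ℕ):ℂ) + 1) / ℓ) =
      ((2 * (j:ℕ) + 1 : ℕ) : ℂ) * (↑Real.pi * I) := by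
    field_simp; push_cast; ring
  rw [harg, Complex.exp_nat_mul, Complex.exp_pi_mul_I]
  exact Odd.neg_one_pow ⟨(j:ℕ), by ring⟩

lemma zeta_inj {ℓ : ℕ} (hℓ : 0 < ℓ) : Function.Injective (zetaRoot ℓ) := by
  intro j k h
  rw [zetaRoot, zetaRoot, Complex.exp_eq_exp_iff_exists_int] at h
  obtain ⟨n, hn⟩ := h
  have hℓ' : (ℓ:ℂ) ≠ 0 := Nat.cast_ne_zero.2 hℓ.ne'
  have hπ : (Real.pi : ℂ) ≠ 0 := Complex.ofReal_ne_zero.2 Real.pi_ne_zero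
  have h1 : (2 * (Real.pi:ℂ) * I) * (((j:ℕ):ℂ)/ℓ - ((k:ℕ):ℂ)/ℓ - n) = 0 := by
    linear_combination hn
  have h2 : ((j:ℕ):ℂ)/ℓ - ((k:ℕ):ℂ)/ℓ - n = 0 := by
    rcases mul_eq_zero.1 h1 with h | h
    · exact absurd h (by simp [hπ, I_ne_zero])
    · exact h
  have h3 : ((j:ℕ):ℂ) = ((k:ℕ):ℂ) + n * ℓ := by
    field_simp at h2
    linear_combination h2
  have h4 : ((j:ℕ):ℤ) = ((k:ℕ):ℤ) + n * ℓ := by exact_mod_cast h3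
  have hj : ((j:ℕ):ℤ) < (ℓ:ℤ) := by exact_mod_cast j.2
  have hk : ((k:ℕ):ℤ) < (ℓ:ℤ) := by exact_mod_cast k.2
  have hj0 : (0:ℤ) ≤ ((j:ℕ):ℤ) := Int.natCast_nonneg _
  have hk0 : (0:ℤ) ≤ ((k:ℕ):ℤ) := Int.natCast_nonneg _
  have hℓz : (0:ℤ) < (ℓ:ℤ) := by exact_mod_cast hℓ
  have hn0 : n = 0 := by
    rcases lt_trichotomy n 0 with hlt | heq | hgt
    · have h5 : n ≤ -1 := by omega
      have h6 : n * ℓ ≤ -ℓ := by nlinarith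
      linarith
    · exact heq
    · have h5 : 1 ≤ n := by omega
      have h6 : (ℓ:ℤ) ≤ n * ℓ := by nlinarith
      linarith
  apply Fin.ext
  have : ((j:ℕ):ℤ) = ((k:ℕ):ℤ) := by rw [h4, hn0]; ring
  exact_mod_cast this

lemma prod_zeta {ℓ : ℕ} (hℓ : 0 < ℓ) :
    ∏ j : Fin ℓ, (X - C (zetaRoot ℓ j)) = X ^ ℓ + 1 := by
  have hpm : (X ^ ℓ + C 1 : ℂ[X]).Monic := monic_X_pow_add_C 1 hℓ.ne'
  have hpd : (X ^ ℓ + C 1 : ℂ[X]).natDegree = ℓ := natDegree_X_pow_add_C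
  have hqm : (∏ j : Fin ℓ, (X - C (zetaRoot ℓ j))).Monic :=
    monic_prod_of_monic _ _ fun j _ => monic_X_sub_C _
  have hqd : (∏ j : Fin ℓ, (X - C (zetaRoot ℓ j))).natDegree = ℓ := by
    rw [natDegree_prod _ _ fun j _ => X_sub_C_ne_zero _]
    simp
  have hp0 : (X ^ ℓ + C 1 : ℂ[X]) ≠ 0 := hpm.ne_zero
  have hnd : (Finset.univ.val.map (zetaRoot ℓ)).Nodup :=
    Finset.univ.nodup.map (zeta_inj hℓ)
  have hs : (Finset.univ.val.map (zetaRoot ℓ)) ≤ (X ^ ℓ + C 1 : ℂ[X]).roots := by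
    refine (Multiset.le_iff_subset hnd).2 fun a ha => ?_
    obtain ⟨j, -, rfl⟩ := Multiset.mem_map.1 ha
    rw [Polynomial.mem_roots hp0]
    simp [Polynomial.IsRoot, zeta_pow hℓ]
  have hdvd : (∏ j : Fin ℓ, (X - C (zetaRoot ℓ j))) ∣ X ^ ℓ + C 1 := by
    have h := (Multiset.prod_X_sub_C_dvd_iff_le_roots hp0 _).2 hs
    have hmm : (Multiset.map (fun a => X - C a) (Multiset.map (zetaRoot ℓ) Finset.univ.val))
        = Multiset.map (fun j => X - C (zetaRoot ℓ j)) Finset.univ.val := by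
      rw [Multiset.map_map]; rfl
    rwa [hmm, ← Finset.prod_eq_multiset_prod] at h
  have heq := eq_of_dvd_of_natDegree_le_of_leadingCoeff hdvd
    (le_of_eq (hpd.trans hqd.symm)) (by rw [hqm.leadingCoeff, hpm.leadingCoeff])
  rw [heq, map_one]

lemma coeff_prod_X_sub_C {ℓ : ℕ} (f : Fin ℓ → ℂ) {k : ℕ} (hk : k ≤ ℓ) :
    (∏ j : Fin ℓ, (X - C (f j))).coeff k =
      (-1) ^ (ℓ - k) * ∑ A ∈ Finset.powersetCard (ℓ - k) Finset.univ, ∏ j ∈ A, f j := by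
  have hcard : Multiset.card (Finset.univ.val.map f) = ℓ := by simp
  have hmm : (Multiset.map (fun a => X - C a) (Multiset.map f Finset.univ.val))
      = Multiset.map (fun j => X - C (f j)) Finset.univ.val := by
    rw [Multiset.map_map]; rfl
  rw [Finset.prod_eq_multiset_prod, ← hmm,
    Multiset.prod_X_sub_C_coeff _ (by rw [hcard]; exact hk), hcard, Finset.esymm_map_val]

lemma mirror_eval {m : ℕ} (Q : ℂ[X]) (hm : Q.Monic) (hd : Q.natDegree = m + 1)
    (h0 : Q.coeff 0 = 1) (y : ℂ) :
    mirrorP (m + 1) (fun a => Q.coeff ((a : ℕ) + 1)) y = Q.eval y := by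
  rw [Polynomial.eval_eq_sum_range, hd, Finset.sum_range_succ, Finset.sum_range_succ']
  have hlead : Q.coeff (m + 1) = 1 := by rw [← hd]; exact hm.coeff_natDegree
  rw [hlead, h0, mirrorP]
  rw [show ((m:ℕ) + 1 - 1) = m from rfl]
  rw [Fin.sum_univ_eq_sum_range (fun i => Q.coeff (i + 1) * y ^ (i + 1)) m]
  ring

/-- The moving roots. -/
noncomputable def rt (ℓ : ℕ) (σ : Equiv.Perm (Fin ℓ)) (j : Fin ℓ) (t : ℝ) : ℂ :=
  Complex.exp (Real.pi * Complex.I *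
    (2 * ((1 - (t:ℂ)) * ((j:ℕ):ℂ) + (t:ℂ) * ((σ j : ℕ):ℂ)) + 1) / (ℓ:ℂ))

lemma rt_continuous (ℓ : ℕ) (σ : Equiv.Perm (Fin ℓ)) (j : Fin ℓ) :
    Continuous (rt ℓ σ j) := by
  unfold rt
  fun_prop

lemma rt_zero {ℓ : ℕ} (σ : Equiv.Perm (Fin ℓ)) (j : Fin ℓ) : rt ℓ σ j 0 = zetaRoot ℓ j := by
  unfold rt zetaRoot
  congr 1
  push_cast
  ring

lemma rt_one {ℓ : ℕ} (σ : Equiv.Perm (Fin ℓ)) (j : Fin ℓ) : rt ℓ σ j 1 = zetaRoot ℓ (σ j) := by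
  unfold rt zetaRoot
  congr 1
  push_cast
  ring

lemma prod_rt {ℓ : ℕ} (hℓ : 0 < ℓ) (σ : Equiv.Perm (Fin ℓ)) (t : ℝ) :
    ∏ j : Fin ℓ, rt ℓ σ j t = (-1) ^ ℓ := by
  have hℓ' : (ℓ:ℂ) ≠ 0 := Nat.cast_ne_zero.2 hℓ.ne'
  have hπ : (Real.pi : ℂ) ≠ 0 := Complex.ofReal_ne_zero.2 Real.pi_ne_zero
  rw [show ∏ j : Fin ℓ, rt ℓ σ j t
      = Complex.exp (∑ j : Fin ℓ, Real.pi * Complex.I *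
        (2 * ((1 - (t:ℂ)) * ((j:ℕ):ℂ) + (t:ℂ) * ((σ j : ℕ):ℂ)) + 1) / (ℓ:ℂ))
    from (Complex.exp_sum _ _).symm]
  have hθ : ∑ j : Fin ℓ, ((1 - (t:ℂ)) * ((j:ℕ):ℂ) + (t:ℂ) * ((σ j : ℕ):ℂ))
      = ∑ j : Fin ℓ, ((j:ℕ):ℂ) := by
    rw [Finset.sum_add_distrib, ← Finset.mul_sum, ← Finset.mul_sum,
      Equiv.sum_comp σ (fun j : Fin ℓ => ((j:ℕ):ℂ))]
    ring
  have hS : (2:ℂ) * (∑ j : Fin ℓ, ((j:ℕ):ℂ)) + ℓ = ℓ * ℓ := by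
    have h1 : ∑ j : Fin ℓ, ((j:ℕ):ℂ) = ((∑ i ∈ Finset.range ℓ, i : ℕ) : ℂ) := by
      rw [Nat.cast_sum]
      exact Fin.sum_univ_eq_sum_range (fun i => ((i:ℕ):ℂ)) ℓ
    have h2 := Finset.sum_range_id_mul_two ℓ
    have h3 : 2 * (∑ i ∈ Finset.range ℓ, i) + ℓ = ℓ * ℓ := by
      obtain ⟨m, rfl⟩ : ∃ m, ℓ = m + 1 := ⟨ℓ - 1, (Nat.succ_pred_eq_of_pos hℓ).symm⟩
      simp only [Nat.add_sub_cancel] at h2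
      nlinarith [h2]
    rw [h1]
    exact_mod_cast congrArg (fun n : ℕ => (n : ℂ)) h3
  have hsum : ∑ j : Fin ℓ, Real.pi * Complex.I *
      (2 * ((1 - (t:ℂ)) * ((j:ℕ):ℂ) + (t:ℂ) * ((σ j : ℕ):ℂ)) + 1) / (ℓ:ℂ)
      = (ℓ:ℂ) * (Real.pi * Complex.I) := by
    simp_rw [show ∀ j : Fin ℓ, (Real.pi : ℂ) * Complex.I *
        (2 * ((1 - (t:ℂ)) * ((j:ℕ):ℂ) + (t:ℂ) * ((σ j : ℕ):ℂ)) + 1) / (ℓ:ℂ)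
        = (Real.pi * Complex.I / ℓ * 2) * ((1 - (t:ℂ)) * ((j:ℕ):ℂ) + (t:ℂ) * ((σ j : ℕ):ℂ))
          + Real.pi * Complex.I / ℓ from fun j => by ring]
    rw [Finset.sum_add_distrib, ← Finset.mul_sum, hθ, Finset.sum_const, Finset.card_univ,
      Fintype.card_fin, nsmul_eq_mul]
    field_simp
    linear_combination hS
  rw [hsum, Complex.exp_nat_mul, Complex.exp_pi_mul_I]

end MirrorAux

open MirrorAux Polynomial in
/-- Lemma 5.2: the monodromy of solutions of the mirror curve equation realizes every
permutation of the roots. -/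
theorem stmt0 (ℓ : ℕ) (hℓ : 0 < ℓ) (σ : Equiv.Perm (Fin ℓ)) :
    ∃ (γ : ℝ → (Fin (ℓ - 1) → ℂ)) (κ : Fin ℓ → ℝ → ℂ),
      ContinuousOn γ (Set.Icc 0 1) ∧ γ 0 = 0 ∧ γ 1 = 0 ∧
      (∀ j, ContinuousOn (κ j) (Set.Icc 0 1)) ∧
      (∀ t ∈ Set.Icc (0 : ℝ) 1, ∀ j, mirrorP ℓ (γ t) (κ j t) = 0) ∧
      (∀ j, κ j 0 = zetaRoot ℓ j) ∧
      (∀ j, κ j 1 = zetaRoot ℓ (σ j)) := by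
  have hℓ' : (ℓ:ℂ) ≠ 0 := Nat.cast_ne_zero.2 hℓ.ne'
  set Q : ℝ → ℂ[X] := fun t => ∏ j : Fin ℓ, (X - C (rt ℓ σ j t)) with hQ
  have hQm : ∀ t, (Q t).Monic := fun t =>
    monic_prod_of_monic _ _ fun j _ => monic_X_sub_C _
  have hQd : ∀ t, (Q t).natDegree = ℓ := fun t => by
    rw [hQ]
    rw [natDegree_prod _ _ fun j _ => X_sub_C_ne_zero _]
    simp
  have hQ0 : ∀ t, (Q t).coeff 0 = 1 := by
    intro t
    rw [Polynomial.coeff_zero_eq_eval_zero, hQ, Polynomial.eval_prod]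
    simp only [eval_sub, eval_X, eval_C, zero_sub]
    rw [show (∏ j : Fin ℓ, -rt ℓ σ j t) = ∏ j : Fin ℓ, (-1) * rt ℓ σ j t by
        exact Finset.prod_congr rfl fun j _ => neg_eq_neg_one_mul _,
      Finset.prod_mul_distrib, Finset.prod_const, Finset.card_univ, Fintype.card_fin,
      prod_rt hℓ σ t, ← pow_add]
    exact Even.neg_one_pow ⟨ℓ, rfl⟩
  refine ⟨fun t a => (Q t).coeff ((a:ℕ) + 1), fun j t => rt ℓ σ j t, ?_, ?_, ?_, ?_, ?_, ?_, ?_⟩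
  · -- continuity of γ
    apply Continuous.continuousOn
    apply continuous_pi
    intro a
    have ha : (a:ℕ) + 1 ≤ ℓ := by have := a.2; omega
    have hform : (fun t => (Q t).coeff ((a:ℕ) + 1))
        = fun t => (-1) ^ (ℓ - ((a:ℕ) + 1)) *
            ∑ A ∈ Finset.powersetCard (ℓ - ((a:ℕ) + 1)) Finset.univ, ∏ j ∈ A, rt ℓ σ j t := by
      funext t
      exact coeff_prod_X_sub_C _ ha
    rw [hform]
    exact continuous_const.mul (continuous_finset_sum _ fun A _ =>
      continuous_finset_prod _ fun j _ => rt_continuous ℓ σ j)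
  · -- γ 0 = 0
    funext a
    have hQ0' : Q 0 = X ^ ℓ + 1 := by
      rw [hQ]
      simp only [rt_zero]
      exact prod_zeta hℓ
    have ha1 : (a:ℕ) + 1 ≠ ℓ := by have := a.2; omega
    simp [hQ0', coeff_X_pow, coeff_one, ha1, Ne.symm ha1]
  · -- γ 1 = 0
    funext a
    have hQ1' : Q 1 = X ^ ℓ + 1 := by
      rw [hQ]
      simp only [rt_one]
      rw [Equiv.prod_comp σ (fun i => X - C (zetaRoot ℓ i))]
      exact prod_zeta hℓ
    have ha1 : (a:ℕ) + 1 ≠ ℓ := by have := a.2; omega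
    simp [hQ1', coeff_X_pow, coeff_one, ha1, Ne.symm ha1]
  · exact fun j => (rt_continuous ℓ σ j).continuousOn
  · -- mirrorP vanishing
    intro t _ j
    obtain ⟨m, rfl⟩ : ∃ m, ℓ = m + 1 := ⟨ℓ - 1, (Nat.succ_pred_eq_of_pos hℓ).symm⟩
    rw [mirror_eval (Q t) (hQm t) (hQd t) (hQ0 t)]
    rw [hQ, Polynomial.eval_prod]
    exact Finset.prod_eq_zero (Finset.mem_univ j) (by simp)
  · exact fun j => rt_zero σ j
  · exact fun j => rt_one σ j
end

section
/- Let ℓ be a positive integer, let I ⊂ ℂ[κ_1,…,κ_ℓ] be the ideal generated by κ_1⋯κ_ℓ − (−1)^ℓ, and let φ : ℂ[q_1,…,q_{ℓ−1}] → ℂ[κ_1,…,κ_ℓ]/I be the ℂ-algebra homomorphism with φ(q_a) = class of (−1)^{ℓ−a} e_{ℓ−a}(κ_1,…,κ_ℓ). If F ∈ ℂ[κ_1,…,κ_ℓ] satisfies σ·F − F ∈ I for every permutation σ of the variables (i.e. the class of F in the quotient is S_ℓ-invariant), then there exists G ∈ ℂ[q_1,…,q_{ℓ−1}] with F − (the chosen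 polynomial representative of) φ(G) ∈ I; that is, the image of φ equals the S_ℓ-invariant subring of ℂ[κ_1,…,κ_ℓ]/I. -/
open MvPolynomial

/-- The ideal `I = (κ_1 ⋯ κ_ℓ - (-1)^ℓ)` of `ℂ[κ_1, …, κ_ℓ]`. -/
noncomputable def hyperIdeal (ℓ : ℕ) : Ideal (MvPolynomial (Fin ℓ) ℂ) :=
  Ideal.span {(∏ i : Fin ℓ, (X i : MvPolynomial (Fin ℓ) ℂ)) - C ((-1 : ℂ) ^ ℓ)}

/-- The ℂ-algebra homomorphism `φ : ℂ[q_1, …, q_{ℓ-1}] → ℂ[κ_1, …, κ_ℓ]/I`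
sending `q_a` to the class of `(-1)^{ℓ-a} e_{ℓ-a}(κ_1, …, κ_ℓ)` (Vieta's relations). -/
noncomputable def vietaHom (ℓ : ℕ) :
    MvPolynomial (Fin (ℓ - 1)) ℂ →ₐ[ℂ] (MvPolynomial (Fin ℓ) ℂ ⧸ hyperIdeal ℓ) :=
  aeval fun a : Fin (ℓ - 1) =>
    Ideal.Quotient.mk (hyperIdeal ℓ)
      ((-1 : MvPolynomial (Fin ℓ) ℂ) ^ (ℓ - ((a : ℕ) + 1)) *
        esymm (Fin ℓ) ℂ (ℓ - ((a : ℕ) + 1)))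

/-- Values of Vieta's substitution at the polynomial level. -/
noncomputable def vietaPoly (ℓ : ℕ) (a : Fin (ℓ - 1)) : MvPolynomial (Fin ℓ) ℂ :=
  (-1 : MvPolynomial (Fin ℓ) ℂ) ^ (ℓ - ((a : ℕ) + 1)) * esymm (Fin ℓ) ℂ (ℓ - ((a : ℕ) + 1))

lemma vietaHom_eq (ℓ : ℕ) (g : MvPolynomial (Fin (ℓ - 1)) ℂ) :
    vietaHom ℓ g = Ideal.Quotient.mk (hyperIdeal ℓ) (aeval (vietaPoly ℓ) g) := by
  have h := comp_aeval (φ := Ideal.Quotient.mkₐ ℂ (hyperIdeal ℓ)) (f := vietaPoly ℓ)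
  have h2 := congrArg (fun ψ => ψ g) h
  simp only [AlgHom.coe_comp, Function.comp_apply, Ideal.Quotient.mkₐ_eq_mk] at h2
  rw [vietaHom]
  exact h2.symm

lemma esymm_top (ℓ : ℕ) : esymm (Fin ℓ) ℂ ℓ = ∏ i : Fin ℓ, X i := by
  rw [esymm, show (Finset.univ : Finset (Fin ℓ)).powersetCard ℓ = {Finset.univ} from by
    simpa using Finset.powersetCard_self (Finset.univ : Finset (Fin ℓ))]
  simp

lemma esymm_mem_range (ℓ : ℕ) (hℓ : 0 < ℓ) (i : Fin ℓ) :
    ∃ g : MvPolynomial (Fin (ℓ - 1)) ℂ,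
      vietaHom ℓ g = Ideal.Quotient.mk (hyperIdeal ℓ) (esymm (Fin ℓ) ℂ ((i : ℕ) + 1)) := by
  by_cases h : (i : ℕ) + 1 = ℓ
  · refine ⟨C ((-1 : ℂ) ^ ℓ), ?_⟩
    rw [h, esymm_top, vietaHom_eq, aeval_C]
    rw [show (algebraMap ℂ (MvPolynomial (Fin ℓ) ℂ)) ((-1 : ℂ) ^ ℓ) = C ((-1 : ℂ) ^ ℓ) from rfl,
      Ideal.Quotient.mk_eq_mk_iff_sub_mem]
    have hmem : (∏ i : Fin ℓ, (X i : MvPolynomial (Fin ℓ) ℂ)) - C ((-1:ℂ)^ℓ) ∈ hyperIdeal ℓ :=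
      Ideal.subset_span rfl
    simpa [neg_sub] using (hyperIdeal ℓ).neg_mem hmem
  · have hi : (i : ℕ) + 2 ≤ ℓ := by omega
    refine ⟨C ((-1 : ℂ) ^ ((i : ℕ) + 1)) * X ⟨ℓ - ((i : ℕ) + 2), by omega⟩, ?_⟩
    rw [vietaHom_eq]
    congr 1
    have hk : ℓ - ((ℓ - ((i : ℕ) + 2)) + 1) = (i : ℕ) + 1 := by omega
    simp only [map_mul, aeval_C, aeval_X, vietaPoly, hk]
    rw [show (algebraMap ℂ (MvPolynomial (Fin ℓ) ℂ)) ((-1 : ℂ) ^ ((i:ℕ)+1))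
      = (-1 : MvPolynomial (Fin ℓ) ℂ) ^ ((i:ℕ)+1) from by simp,
      ← mul_assoc, ← pow_add, ← two_mul, pow_mul]
    simp

/-- From the proof of Lemma 5.2: the image of `φ` equals the `S_ℓ`-invariant subring of
`ℂ[κ_1, …, κ_ℓ]/I`:  if the class of `F` is invariant under all permutations of the
variables, then it lies in the range of `φ`. -/
theorem stmt5 (ℓ : ℕ) (hℓ : 0 < ℓ) (F : MvPolynomial (Fin ℓ) ℂ)
    (hF : ∀ σ : Equiv.Perm (Fin ℓ),
      rename (⇑σ) F - F ∈ hyperIdeal ℓ) :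
    ∃ G : MvPolynomial (Fin (ℓ - 1)) ℂ,
      Ideal.Quotient.mk (hyperIdeal ℓ) F = vietaHom ℓ G := by
  classical
  set mk := Ideal.Quotient.mk (hyperIdeal ℓ) with hmkdef
  -- the symmetrized polynomial
  set Fbar : MvPolynomial (Fin ℓ) ℂ :=
    ((Nat.factorial ℓ : ℂ))⁻¹ • ∑ σ : Equiv.Perm (Fin ℓ), rename (⇑σ) F with hFbar
  have hsym : Fbar.IsSymmetric := by
    intro τ
    rw [hFbar, map_smul, map_sum]
    congr 1
    simp_rw [rename_rename]
    exact Fintype.sum_equiv (Equiv.mulLeft τ) _ _ (fun σ => by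
      congr 1)
  have hmk : mk Fbar = mk F := by
    have h1 : ∀ σ : Equiv.Perm (Fin ℓ), mk (rename (⇑σ) F) = mk F := fun σ => by
      rw [hmkdef, Ideal.Quotient.mk_eq_mk_iff_sub_mem]; exact hF σ
    have hfac : (Nat.factorial ℓ : ℂ) ≠ 0 := Nat.cast_ne_zero.mpr (Nat.factorial_ne_zero ℓ)
    calc mk Fbar = ((Nat.factorial ℓ : ℂ))⁻¹ • mk (∑ σ : Equiv.Perm (Fin ℓ), rename (⇑σ) F) := by
          rw [hFbar, hmkdef, ← Ideal.Quotient.mkₐ_eq_mk ℂ]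
          exact map_smul (Ideal.Quotient.mkₐ ℂ (hyperIdeal ℓ)) _ _
      _ = ((Nat.factorial ℓ : ℂ))⁻¹ • ∑ σ : Equiv.Perm (Fin ℓ), mk (rename (⇑σ) F) := by
          rw [map_sum]
      _ = ((Nat.factorial ℓ : ℂ))⁻¹ • ((Nat.factorial ℓ : ℂ) • mk F) := by
          rw [Finset.sum_congr rfl (fun σ _ => h1 σ), Finset.sum_const,
            Finset.card_univ, Nat.cast_smul_eq_nsmul ℂ]
          congr 2
          rw [Fintype.card_perm, Fintype.card_fin]
      _ = mk F := by rw [smul_smul, inv_mul_cancel₀ hfac, one_smul]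
  obtain ⟨P, hP⟩ := esymmAlgHom_fin_surjective (R := ℂ) (le_refl ℓ)
      ⟨Fbar, (MvPolynomial.mem_symmetricSubalgebra Fbar).2 hsym⟩
  have hP' : aeval (fun i : Fin ℓ => esymm (Fin ℓ) ℂ ((i : ℕ) + 1)) P = Fbar := by
    have h := congrArg Subtype.val hP
    rwa [esymmAlgHom_apply] at h
  choose g hg using fun i : Fin ℓ => esymm_mem_range ℓ hℓ i
  refine ⟨aeval g P, ?_⟩
  have h2 : vietaHom ℓ (aeval g P) = aeval (fun i => vietaHom ℓ (g i)) P :=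
    comp_aeval_apply (f := g) (vietaHom ℓ) P
  have h3 : mk (aeval (fun i : Fin ℓ => esymm (Fin ℓ) ℂ ((i:ℕ)+1)) P)
      = aeval (fun i : Fin ℓ => mk (esymm (Fin ℓ) ℂ ((i:ℕ)+1))) P := by
    rw [hmkdef, ← Ideal.Quotient.mkₐ_eq_mk ℂ]
    exact comp_aeval_apply (f := fun i : Fin ℓ => esymm (Fin ℓ) ℂ ((i:ℕ)+1)) (Ideal.Quotient.mkₐ ℂ (hyperIdeal ℓ)) P
  rw [← hmk, ← hP', h3, h2,
    show (fun i : Fin ℓ => vietaHom ℓ (g i))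
      = (fun i : Fin ℓ => mk (esymm (Fin ℓ) ℂ ((i:ℕ)+1))) from funext hg]
end
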